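/- For simplicial groups G and H, the shuffle map interacts with the cone operators by ∇_{EG,EH}(S_G ⊗ S_H) = S_{G×H} ∘ ∇_{EG,EH} ∘ (1⊗S_H − S_G⊗1) on C(EG) ⊗ C(EH), where S denotes the rescaled contracting homotopy on C(E−) and E(G×H) = EG × EH. -/

import Mathlib

/-!
STATEMENT 16.  For simplicial groups `G`, `H` the shuffle map interacts with
the cone operators by
`∇_{EG,EH} ∘ (S_G ⊗ S_H) = S_{G×H} ∘ ∇_{EG,EH} ∘ (1 ⊗ S_H - S_G ⊗ 1)`
on (normalised) `C(EG) ⊗ C(EH)`, where `E(G×H) = EG × EH` and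
`S_{G×H} = S_G × S_H` componentwise.

Koszul signs of the odd operators (`S_H` in `S_G ⊗ S_H` and in `1 ⊗ S_H`) are
implemented by the parity operator `parOp`; the identity is stated modulo the
degenerate chains of `EG × EH` (i.e. in the normalised complex).
-/

open TensorProduct

noncomputable section

/-- A simplicial set, encoded with ℕ-indexed face maps `d i : X_{n+1} → X_n`
and degeneracy maps `s i : X_n → X_{n+1}` (only indices in the valid range
are constrained, by the usual simplicial identities). -/
structure SST : Type 1 where
  X : ℕ → Type
  d : ℕ → {n : ℕ} → X (n+1) → X n
  s : ℕ → {n : ℕ} → X n → X (n+1)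
  h_dd : ∀ {n : ℕ} (i j : ℕ), i < j → j ≤ n + 2 → ∀ x : X (n+2),
    d i (d j x) = d (j-1) (d i x)
  h_ds_lt : ∀ {n : ℕ} (i j : ℕ), i < j → j ≤ n + 1 → ∀ x : X (n+1),
    d i (s j x) = s (j-1) (d i x)
  h_ds_eq : ∀ {n : ℕ} (j : ℕ), j ≤ n → ∀ x : X n, d j (s j x) = x
  h_ds_succ : ∀ {n : ℕ} (j : ℕ), j ≤ n → ∀ x : X n, d (j+1) (s j x) = x
  h_ds_gt : ∀ {n : ℕ} (i j : ℕ), j + 1 < i → i ≤ n + 2 → ∀ x : X (n+1),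
    d i (s j x) = s j (d (i-1) x)
  h_ss : ∀ {n : ℕ} (i j : ℕ), i ≤ j → j ≤ n → ∀ x : X n,
    s i (s j x) = s (j+1) (s i x)

namespace SST

/-- Product of simplicial sets. -/
def prod (S T : SST) : SST where
  X n := S.X n × T.X n
  d := fun i {n} x => (S.d i x.1, T.d i x.2)
  s := fun i {n} x => (S.s i x.1, T.s i x.2)
  h_dd := fun i j h1 h2 x => Prod.ext (S.h_dd i j h1 h2 x.1) (T.h_dd i j h1 h2 x.2)
  h_ds_lt := fun i j h1 h2 x => Prod.ext (S.h_ds_lt i j h1 h2 x.1) (T.h_ds_lt i j h1 h2 x.2)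
  h_ds_eq := fun j h x => Prod.ext (S.h_ds_eq j h x.1) (T.h_ds_eq j h x.2)
  h_ds_succ := fun j h x => Prod.ext (S.h_ds_succ j h x.1) (T.h_ds_succ j h x.2)
  h_ds_gt := fun i j h1 h2 x => Prod.ext (S.h_ds_gt i j h1 h2 x.1) (T.h_ds_gt i j h1 h2 x.2)
  h_ss := fun i j h1 h2 x => Prod.ext (S.h_ss i j h1 h2 x.1) (T.h_ss i j h1 h2 x.2)

/-- The set of all simplices of `S`. -/
abbrev Tot (S : SST) : Type := Σ n : ℕ, S.X n

/-- Degree cast. -/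
def castX (S : SST) {a b : ℕ} (h : a = b) (x : S.X a) : S.X b := h ▸ x

/-- Iterated last face map `(∂̃)^k : X_{n+k} → X_n`. -/
def dTop (S : SST) : (k : ℕ) → {n : ℕ} → S.X (n + k) → S.X n
  | 0, _, x => x
  | (k+1), n, x => S.dTop k (S.d (n + k + 1) x)

/-- Iterated zeroth face map `(∂_0)^k : X_{n+k} → X_n`. -/
def d0 (S : SST) : (k : ℕ) → {n : ℕ} → S.X (n + k) → S.X n
  | 0, _, x => x
  | (k+1), _, x => S.d0 k (S.d 0 x)

/-- `∂_a^{a+k-1} = ∂_a ∘ ∂_{a+1} ∘ ⋯ ∘ ∂_{a+k-1} : X_{n+k} → X_n`. -/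
def dMid (S : SST) (a : ℕ) : (k : ℕ) → {n : ℕ} → S.X (n + k) → S.X n
  | 0, _, x => x
  | (k+1), n, x => S.dMid a k (S.d (a + k) x)

/-- Iterated degeneracies `s_{i_q} ∘ ⋯ ∘ s_{i_1}` for a descending list. -/
def sIter (S : SST) : (l : List ℕ) → {n : ℕ} → S.X n → S.X (n + l.length)
  | [], _, x => x
  | (i :: t), _, x => S.s i (S.sIter t x)

/-- `s_ν : X_n → X_{n + |ν|}` for a finite set `ν ⊆ ℕ` of degeneracy indices
(applied in the usual order `s_ν = s_{ν_q} ∘ ⋯ ∘ s_{ν_1}`, `ν_1 < ⋯ < ν_q`). -/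
def sSet (S : SST) (ν : Finset ℕ) {n : ℕ} (x : S.X n) : S.X (n + ν.card) :=
  S.castX (by simp) (S.sIter ((ν.sort (· ≤ ·)).reverse) x)

end SST

variable (R : Type) [CommRing R]

/-- The (unnormalised) chain module on a simplicial set. -/
abbrev Ch (S : SST) : Type := S.Tot →₀ R

/-- The generator corresponding to a simplex. -/
def gsing (S : SST) {n : ℕ} (x : S.X n) : Ch R S := Finsupp.single ⟨n, x⟩ 1

/-- The submodule of degenerate chains (whose quotient is the normalised
chain complex). -/
def DegSub (S : SST) : Submodule R (Ch R S) :=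
  Submodule.span R {c | ∃ (n j : ℕ) (x : S.X n), j ≤ n ∧ c = gsing R S (S.s j x)}

/-- The simplicial boundary `∂ = Σ (-1)^k ∂_k`. -/
def bd (S : SST) : Ch R S →ₗ[R] Ch R S :=
  (Finsupp.lift (Ch R S) R S.Tot) fun z =>
    match z with
    | ⟨0, _⟩ => 0
    | ⟨n+1, x⟩ => ∑ k ∈ Finset.range (n+2), ((-1 : R)^k) • gsing R S (S.d k x)

/-- The parity operator `(-1)^deg` on chains. -/
def parOp (S : SST) : Ch R S →ₗ[R] Ch R S :=
  (Finsupp.lift (Ch R S) R S.Tot) fun z => ((-1 : R)^z.1) • Finsupp.single z 1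

/-- The span of the simplices of degree `n`. -/
def GrSub (S : SST) (n : ℕ) : Submodule R (Ch R S) :=
  Submodule.span R {c | ∃ x : S.X n, c = gsing R S x}

/-- The sign `sgn(μ, ν)` of a shuffle given by a partition `(μ, ν)`. -/
def shSign (μ ν : Finset ℕ) : ℤ := (-1) ^ (∑ a ∈ μ, (ν.filter (fun b => b < a)).card)

/-- The Eilenberg–Mac Lane shuffle map on a pair of simplices:
`∇(x ⊗ y) = Σ_{(μ,ν)⊢(m,n)} sgn(μ,ν) (s_ν x, s_μ y)`. -/
def shufAux (S T : SST) (p : S.Tot) (q : T.Tot) : Ch R (S.prod T) :=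
  ∑ ν ∈ (Finset.range (p.1 + q.1)).powerset,
    if h : ν ⊆ Finset.range (p.1 + q.1) ∧ ν.card = q.1 then
      ((shSign ((Finset.range (p.1 + q.1)) \ ν) ν : ℤ) : R) •
        Finsupp.single
          ⟨p.1 + q.1,
            (S.castX (by rw [h.2]) (S.sSet ν p.2),
             T.castX (by rw [Finset.card_sdiff, Finset.inter_eq_left.mpr h.1, Finset.card_range, h.2]; omega)
               (T.sSet ((Finset.range (p.1 + q.1)) \ ν) q.2))⟩ 1
    else 0

/-- The shuffle map as a bilinear map. -/
def shuf (S T : SST) : Ch R S →ₗ[R] Ch R T →ₗ[R] Ch R (S.prod T) :=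
  (Finsupp.lift (Ch R T →ₗ[R] Ch R (S.prod T)) R S.Tot) fun p =>
    (Finsupp.lift (Ch R (S.prod T)) R T.Tot) fun q => shufAux R S T p q

/-- The shuffle map `∇ : C(X) ⊗ C(Y) → C(X × Y)`. -/
def shufT (S T : SST) : Ch R S ⊗[R] Ch R T →ₗ[R] Ch R (S.prod T) :=
  TensorProduct.lift (shuf R S T)

/-- The Alexander–Whitney map
`AW(x, y) = Σ_i (∂̃)^{n-i} x ⊗ (∂_0)^i y : C(X × Y) → C(X) ⊗ C(Y)`. -/
def AWmap (S T : SST) : Ch R (S.prod T) →ₗ[R] Ch R S ⊗[R] Ch R T :=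
  (Finsupp.lift (Ch R S ⊗[R] Ch R T) R (S.prod T).Tot) fun p =>
    ∑ i ∈ (Finset.range (p.1 + 1)).attach,
      (Finsupp.single
          (⟨i.1, S.dTop (p.1 - i.1)
            (S.castX (by have := Finset.mem_range.mp i.2; omega) p.2.1)⟩ : S.Tot) (1 : R))
        ⊗ₜ[R]
      (Finsupp.single
          (⟨p.1 - i.1, T.d0 i.1
            (T.castX (by have := Finset.mem_range.mp i.2; omega) p.2.2)⟩ : T.Tot) (1 : R))

/-- The chain map induced by the swap `τ : X × Y → Y × X`. -/
def swapMap (S T : SST) : Ch R (S.prod T) →ₗ[R] Ch R (T.prod S) :=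
  (Finsupp.lift (Ch R (T.prod S)) R (S.prod T).Tot) fun p =>
    Finsupp.single ⟨p.1, (p.2.2, p.2.1)⟩ 1

/-- The graded transposition `T(a ⊗ b) = (-1)^{|a||b|} b ⊗ a`. -/
def twistMap (S T : SST) : Ch R S ⊗[R] Ch R T →ₗ[R] Ch R T ⊗[R] Ch R S :=
  TensorProduct.lift <|
    (Finsupp.lift (Ch R T →ₗ[R] Ch R T ⊗[R] Ch R S) R S.Tot) fun p =>
      (Finsupp.lift (Ch R T ⊗[R] Ch R S) R T.Tot) fun q =>
        ((-1 : R) ^ (p.1 * q.1)) • (Finsupp.single q 1 ⊗ₜ[R] Finsupp.single p 1)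

/-- The chain map induced by the diagonal. -/
def diagMap (S : SST) : Ch R S →ₗ[R] Ch R (S.prod S) :=
  (Finsupp.lift (Ch R (S.prod S)) R S.Tot) fun p => Finsupp.single ⟨p.1, (p.2, p.2)⟩ 1

/-- A simplex is nondegenerate if it is not of the form `s_j y`. -/
def NondegT (S : SST) : S.Tot → Prop
  | ⟨0, _⟩ => True
  | ⟨n+1, x⟩ => ∀ j ≤ n, ∀ y : S.X n, x ≠ S.s j y


/-- The combinatorial structure of the universal bundle `EG` of a simplicial
group `G`: a basepoint `e₀ ∈ EG_0` and the shifted last degeneracy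
`S̃ : EG_n → EG_{n+1}`, with its structural identities. -/
structure ConeData (E : SST) where
  e0 : E.X 0
  St : ∀ {n : ℕ}, E.X n → E.X (n+1)
  hd_mid : ∀ {n : ℕ} (i : ℕ), i ≤ n + 1 → ∀ e : E.X (n+1),
    E.d i (St e) = St (E.d i e)
  hd_zero : ∀ e : E.X 0, E.d 0 (St e) = e0
  hd_top : ∀ {n : ℕ} (e : E.X n), E.d (n+1) (St e) = e
  hs_mid : ∀ {n : ℕ} (i : ℕ), i ≤ n → ∀ e : E.X n, E.s i (St e) = St (E.s i e)
  hs_top : ∀ {n : ℕ} (e : E.X n), E.s (n+1) (St e) = St (St e)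
  hSe0 : St e0 = E.s 0 e0

/-- The rescaled operator `S(e) = -(-1)^{|e|} S̃(e)` on chains. -/
def Sop (E : SST) (CD : ConeData E) : Ch R E →ₗ[R] Ch R E :=
  (Finsupp.lift (Ch R E) R E.Tot) fun z =>
    (-(-1 : R) ^ z.1) • gsing R E (CD.St z.2)

/-- The componentwise cone structure on `E(G×H) = EG × EH`. -/
def ConeData.prod {E F : SST} (CE : ConeData E) (CF : ConeData F) :
    Ch R (E.prod F) →ₗ[R] Ch R (E.prod F) :=
  (Finsupp.lift (Ch R (E.prod F)) R (E.prod F).Tot) fun z =>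
    (-(-1 : R) ^ z.1) •
      (Finsupp.single (⟨z.1 + 1, (CE.St z.2.1, CF.St z.2.2)⟩ : (E.prod F).Tot) 1)

/-! ### Auxiliary lemmas -/

section Aux

open Finset

lemma aux_sort_insert_max {a : ℕ} {s : Finset ℕ} (h1 : ∀ b ∈ s, b < a) (h2 : a ∉ s) :
    (insert a s).sort (· ≤ ·) = s.sort (· ≤ ·) ++ [a] := by
  refine List.Perm.eq_of_pairwise' (Finset.pairwise_sort _ _) ?_ ?_
  · rw [List.pairwise_append]
    refine ⟨Finset.pairwise_sort _ _, List.pairwise_singleton _ a, ?_⟩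
    intro b hb c hc
    rw [List.mem_singleton] at hc
    subst hc
    exact le_of_lt (h1 b ((Finset.mem_sort _).mp hb))
  · exact ((insert a s).sort_perm_toList _).trans ((Finset.toList_insert h2).trans
      (((s.sort_perm_toList _).symm.cons a).trans (List.perm_append_singleton a _).symm))

namespace SST

variable (S : SST)

/-- Degeneracy at the level of total simplices. -/
def sT (i : ℕ) (t : S.Tot) : S.Tot := ⟨t.1 + 1, S.s i t.2⟩

lemma tot_cast {a b : ℕ} (h : a = b) (x : S.X a) :
    (⟨b, S.castX h x⟩ : S.Tot) = ⟨a, x⟩ := by cases h; rfl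

/-- `sSet` at the level of total simplices. -/
def sSetT (ν : Finset ℕ) (t : S.Tot) : S.Tot := ⟨t.1 + ν.card, S.sSet ν t.2⟩

lemma sSetT_eq (ν : Finset ℕ) {n : ℕ} (x : S.X n) :
    S.sSetT ν ⟨n, x⟩ =
      ⟨n + ((ν.sort (· ≤ ·)).reverse).length, S.sIter ((ν.sort (· ≤ ·)).reverse) x⟩ := by
  exact S.tot_cast _ _

lemma sSetT_empty (t : S.Tot) : S.sSetT ∅ t = t := by
  obtain ⟨n, x⟩ := t
  rw [S.sSetT_eq, Finset.sort_empty]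
  rfl

lemma sSetT_insert_max {a : ℕ} {ν : Finset ℕ} (h1 : ∀ b ∈ ν, b < a) (h2 : a ∉ ν)
    (t : S.Tot) : S.sSetT (insert a ν) t = S.sT a (S.sSetT ν t) := by
  obtain ⟨n, x⟩ := t
  rw [S.sSetT_eq, S.sSetT_eq, aux_sort_insert_max h1 h2, List.reverse_append]
  rfl

end SST

namespace ConeData

variable {E : SST} (CE : ConeData E)

/-- `St` at the level of total simplices. -/
def StT (t : E.Tot) : E.Tot := ⟨t.1 + 1, CE.St t.2⟩

lemma sT_StT_mid (i : ℕ) (t : E.Tot) (h : i ≤ t.1) :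
    E.sT i (CE.StT t) = CE.StT (E.sT i t) :=
  congrArg (fun z => (⟨t.1 + 2, z⟩ : E.Tot)) (CE.hs_mid i h t.2)

lemma sT_StT_top (t : E.Tot) :
    E.sT (t.1 + 1) (CE.StT t) = CE.StT (CE.StT t) :=
  congrArg (fun z => (⟨t.1 + 2, z⟩ : E.Tot)) (CE.hs_top t.2)

lemma sT_top_of_StT {u w : E.Tot} (hu : u = CE.StT w) : E.sT u.1 u = CE.StT u := by
  subst hu; exact CE.sT_StT_top w

lemma St_cast {a d : ℕ} (h : a = d) (u : E.X a) :
    (⟨d + 1, CE.St (E.castX h u)⟩ : E.Tot) = ⟨a + 1, CE.St u⟩ := by cases h; rfl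

/-- The exact commutation `s_ν ∘ S̃ = S̃ ∘ s_ν` for admissible `ν`. -/
lemma sSetT_StT_comm (ν : Finset ℕ) (t : E.Tot)
    (h : ∀ a ∈ ν, ((Finset.range (a+1)) \ ν).card ≤ t.1) :
    E.sSetT ν (CE.StT t) = CE.StT (E.sSetT ν t) := by
  induction ν using Finset.strongInduction with
  | _ ν ih =>
  rcases ν.eq_empty_or_nonempty with rfl | hne
  · rw [E.sSetT_empty, E.sSetT_empty]
  · set M := ν.max' hne with hM
    have hMem : M ∈ ν := ν.max'_mem hne
    have hins : ν = insert M (ν.erase M) := (Finset.insert_erase hMem).symm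
    have hlt : ∀ b ∈ ν.erase M, b < M := by
      intro b hb
      have hbv := Finset.mem_of_mem_erase hb
      exact lt_of_le_of_ne (ν.le_max' b hbv) (Finset.ne_of_mem_erase hb)
    have hsub : ν ⊆ Finset.range (M+1) := by
      intro b hb
      exact Finset.mem_range.mpr (Nat.lt_succ_of_le (ν.le_max' b hb))
    have hcard : (Finset.range (M+1) \ ν).card = M + 1 - ν.card := by
      rw [Finset.card_sdiff_of_subset hsub, Finset.card_range]
    have hMle : M ≤ t.1 + (ν.erase M).card := by
      have h1 := h M hMem
      rw [hcard] at h1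
      have h2 : (ν.erase M).card = ν.card - 1 := Finset.card_erase_of_mem hMem
      have h3 : 1 ≤ ν.card := Finset.card_pos.mpr hne
      omega
    have hcond : ∀ a ∈ ν.erase M, ((Finset.range (a+1)) \ ν.erase M).card ≤ t.1 := by
      intro a ha
      have haM : a < M := hlt a ha
      have : Finset.range (a+1) \ ν.erase M = Finset.range (a+1) \ ν := by
        ext b
        simp only [Finset.mem_sdiff, Finset.mem_range, Finset.mem_erase]
        constructor
        · rintro ⟨hb1, hb2⟩
          exact ⟨hb1, fun hb => hb2 ⟨by omega, hb⟩⟩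
        · rintro ⟨hb1, hb2⟩
          exact ⟨hb1, fun hb => hb2 hb.2⟩
      rw [this]
      exact h a (Finset.mem_of_mem_erase ha)
    rw [hins, E.sSetT_insert_max hlt (Finset.notMem_erase M ν),
      E.sSetT_insert_max hlt (Finset.notMem_erase M ν),
      ih (ν.erase M) (Finset.erase_ssubset hMem) hcond,
      CE.sT_StT_mid M _ hMle]

/-- `s_ν ∘ S̃` always lands in the image of `S̃`, for admissible `ν`. -/
lemma sSetT_StT_ex (ν : Finset ℕ) (t : E.Tot)
    (h : ∀ a ∈ ν, ((Finset.range (a+1)) \ ν).card ≤ t.1 + 1) :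
    ∃ w : E.Tot, E.sSetT ν (CE.StT t) = CE.StT w := by
  induction ν using Finset.strongInduction with
  | _ ν ih =>
  rcases ν.eq_empty_or_nonempty with rfl | hne
  · exact ⟨t, by rw [E.sSetT_empty]⟩
  · set M := ν.max' hne with hM
    have hMem : M ∈ ν := ν.max'_mem hne
    have hins : ν = insert M (ν.erase M) := (Finset.insert_erase hMem).symm
    have hlt : ∀ b ∈ ν.erase M, b < M := by
      intro b hb
      have hbv := Finset.mem_of_mem_erase hb
      exact lt_of_le_of_ne (ν.le_max' b hbv) (Finset.ne_of_mem_erase hb)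
    have hsub : ν ⊆ Finset.range (M+1) := by
      intro b hb
      exact Finset.mem_range.mpr (Nat.lt_succ_of_le (ν.le_max' b hb))
    have hcard : (Finset.range (M+1) \ ν).card = M + 1 - ν.card := by
      rw [Finset.card_sdiff_of_subset hsub, Finset.card_range]
    have hcond : ∀ a ∈ ν.erase M, ((Finset.range (a+1)) \ ν.erase M).card ≤ t.1 + 1 := by
      intro a ha
      have haM : a < M := hlt a ha
      have : Finset.range (a+1) \ ν.erase M = Finset.range (a+1) \ ν := by
        ext b
        simp only [Finset.mem_sdiff, Finset.mem_range, Finset.mem_erase]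
        constructor
        · rintro ⟨hb1, hb2⟩
          exact ⟨hb1, fun hb => hb2 ⟨by omega, hb⟩⟩
        · rintro ⟨hb1, hb2⟩
          exact ⟨hb1, fun hb => hb2 hb.2⟩
      rw [this]
      exact h a (Finset.mem_of_mem_erase ha)
    obtain ⟨w, hw⟩ := ih (ν.erase M) (Finset.erase_ssubset hMem) hcond
    have hwdeg : w.1 + 1 = t.1 + 1 + (ν.erase M).card := by
      have := congrArg Sigma.fst hw
      simpa [SST.sSetT, ConeData.StT] using this.symm
    have hMle : M ≤ w.1 + 1 := by
      have h1 := h M hMem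
      rw [hcard] at h1
      have h2 : (ν.erase M).card = ν.card - 1 := Finset.card_erase_of_mem hMem
      have h3 : 1 ≤ ν.card := Finset.card_pos.mpr hne
      omega
    rw [hins, E.sSetT_insert_max hlt (Finset.notMem_erase M ν), hw]
    rcases Nat.lt_or_ge M (w.1 + 1) with hc | hc
    · exact ⟨E.sT M w, CE.sT_StT_mid M w (Nat.lt_succ_iff.mp hc)⟩
    · have : M = w.1 + 1 := le_antisymm hMle hc
      rw [this]
      exact ⟨CE.StT w, CE.sT_StT_top w⟩

end ConeData

/-- Equality of product simplices from componentwise `Tot`-equalities. -/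
lemma tot_pair_eq (E F : SST) {d d' : ℕ} {u : E.X d} {v : F.X d} {u' : E.X d'} {v' : F.X d'}
    (h1 : (⟨d, u⟩ : E.Tot) = ⟨d', u'⟩) (h2 : (⟨d, v⟩ : F.Tot) = ⟨d', v'⟩) :
    (⟨d, (u, v)⟩ : (E.prod F).Tot) = ⟨d', (u', v')⟩ := by
  have hd : d = d' := congrArg Sigma.fst h1
  subst hd
  obtain rfl : u = u' := by simpa using h1
  obtain rfl : v = v' := by simpa using h2
  rfl

lemma aux_lift_single {M : Type} [AddCommMonoid M] [Module R M] {α : Type} (f : α → M)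
    (a : α) (b : R) :
    (Finsupp.lift M R α f) (Finsupp.single a b) = b • f a := by
  rw [Finsupp.lift_apply, Finsupp.sum_single_index]
  simp

lemma aux_sdiff_range_succ {N : ℕ} {ν : Finset ℕ} (hν : ν ⊆ Finset.range N) :
    Finset.range (N+1) \ ν = insert N (Finset.range N \ ν) := by
  ext b
  simp only [Finset.mem_sdiff, Finset.mem_range, Finset.mem_insert]
  constructor
  · rintro ⟨hb1, hb2⟩
    rcases Nat.lt_succ_iff_lt_or_eq.mp hb1 with h | h
    · exact Or.inr ⟨h, hb2⟩
    · exact Or.inl h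
  · rintro (rfl | ⟨hb1, hb2⟩)
    · refine ⟨Nat.lt_succ_self _, fun hb => ?_⟩
      have := Finset.mem_range.mp (hν hb); omega
    · exact ⟨by omega, hb2⟩

lemma aux_sdiff_insert_top {N : ℕ} {ν : Finset ℕ} (hν : ν ⊆ Finset.range N) :
    Finset.range (N+1) \ insert N ν = Finset.range N \ ν := by
  ext b
  simp only [Finset.mem_sdiff, Finset.mem_range, Finset.mem_insert, not_or]
  constructor
  · rintro ⟨hb1, hb2, hb3⟩
    exact ⟨by omega, hb3⟩
  · rintro ⟨hb1, hb2⟩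
    exact ⟨by omega, by omega, hb2⟩

lemma aux_shSign_case1 {N k : ℕ} {ν : Finset ℕ} (hν : ν ⊆ Finset.range N) (hc : ν.card = k) :
    shSign (Finset.range (N+1) \ ν) ν = (-1)^k * shSign (Finset.range N \ ν) ν := by
  rw [aux_sdiff_range_succ hν]
  unfold shSign
  rw [Finset.sum_insert (by simp)]
  have h1 : ν.filter (fun b => b < N) = ν :=
    Finset.filter_true_of_mem (fun b hb => Finset.mem_range.mp (hν hb))
  rw [h1, hc, pow_add]

lemma aux_shSign_case2 {N : ℕ} {ν : Finset ℕ} (hν : ν ⊆ Finset.range N) :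
    shSign (Finset.range N \ ν) (insert N ν) = shSign (Finset.range N \ ν) ν := by
  unfold shSign
  congr 1
  apply Finset.sum_congr rfl
  intro a ha
  have haN : a < N := Finset.mem_range.mp (Finset.mem_sdiff.mp ha).1
  rw [Finset.filter_insert, if_neg (by omega)]

lemma parOp_single (E : SST) (t : E.Tot) (b : R) :
    parOp R E (Finsupp.single t b) = (b * (-1:R)^t.1) • Finsupp.single t 1 := by
  rw [parOp, aux_lift_single, smul_smul]

lemma Sop_single (E : SST) (CE : ConeData E) (t : E.Tot) (b : R) :
    Sop R E CE (Finsupp.single t b)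
      = (b * (-(-1:R)^t.1)) • Finsupp.single (CE.StT t) 1 := by
  rw [Sop, aux_lift_single, smul_smul]
  rfl

lemma Sprod_single (E F : SST) (CE : ConeData E) (CF : ConeData F)
    (t : (E.prod F).Tot) (b : R) :
    ConeData.prod R CE CF (Finsupp.single t b)
      = (b * (-(-1:R)^t.1)) •
          Finsupp.single (⟨t.1 + 1, (CE.St t.2.1, CF.St t.2.2)⟩ : (E.prod F).Tot) 1 := by
  rw [ConeData.prod, aux_lift_single, smul_smul]

lemma shufT_single (E F : SST) (p : E.Tot) (q : F.Tot) (b c : R) :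
    shufT R E F (Finsupp.single p b ⊗ₜ[R] Finsupp.single q c)
      = (b * c) • shufAux R E F p q := by
  rw [shufT, TensorProduct.lift.tmul, shuf, aux_lift_single, LinearMap.smul_apply,
    aux_lift_single, smul_smul]

section Simplex

variable {E F : SST} (CE : ConeData E) (CF : ConeData F)

/-- Case `m+n+1 ∈ μ`: the `A`-simplex equals the `S`-image of the `B`-simplex. -/
lemma simplex_eq1 {m n : ℕ} (x : E.X m) (y : F.X n) (ν : Finset ℕ)
    (hν : ν ⊆ Finset.range (m+n+1)) (hc : ν.card = n+1)
    {h1 : m + 1 + ν.card = m+1+(n+1)}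
    {h2 : n + 1 + (Finset.range (m+1+(n+1)) \ ν).card = m+1+(n+1)}
    {h1' : m + ν.card = m+(n+1)}
    {h2' : n + 1 + (Finset.range (m+(n+1)) \ ν).card = m+(n+1)} :
    (⟨m+1+(n+1), (E.castX h1 (E.sSet ν (CE.St x)),
        F.castX h2 (F.sSet (Finset.range (m+1+(n+1)) \ ν) (CF.St y)))⟩ : (E.prod F).Tot)
    = ⟨m+(n+1)+1, (CE.St (E.castX h1' (E.sSet ν x)),
        CF.St (F.castX h2' (F.sSet (Finset.range (m+(n+1)) \ ν) (CF.St y))))⟩ := by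
  have hr1 : Finset.range (m+1+(n+1)) = Finset.range (m+n+2) := by
    rw [show m+1+(n+1) = m+n+2 from by omega]
  have hr2 : Finset.range (m+(n+1)) = Finset.range (m+n+1) := by
    rw [show m+(n+1) = m+n+1 from by omega]
  have hcard : (Finset.range (m+n+1) \ ν).card = m := by
    rw [Finset.card_sdiff_of_subset hν, Finset.card_range, hc]; omega
  apply tot_pair_eq
  · rw [E.tot_cast h1, CE.St_cast h1']
    refine CE.sSetT_StT_comm ν ⟨m, x⟩ ?_
    intro a ha
    have hsub : Finset.range (a+1) \ ν ⊆ Finset.range (m+n+1) \ ν := by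
      refine Finset.sdiff_subset_sdiff ?_ le_rfl
      intro b hb
      have := Finset.mem_range.mp (hν ha)
      have := Finset.mem_range.mp hb
      exact Finset.mem_range.mpr (by omega)
    calc (Finset.range (a+1) \ ν).card ≤ (Finset.range (m+n+1) \ ν).card :=
          Finset.card_le_card hsub
      _ = m := hcard
  · rw [F.tot_cast h2, CF.St_cast h2']
    rw [hr1, hr2]
    rw [aux_sdiff_range_succ hν]
    have hnm : m+n+1 ∉ Finset.range (m+n+1) \ ν := by simp
    have hlt : ∀ b ∈ Finset.range (m+n+1) \ ν, b < m+n+1 := by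
      intro b hb; exact Finset.mem_range.mp (Finset.mem_sdiff.mp hb).1
    show F.sSetT (insert (m+n+1) (Finset.range (m+n+1) \ ν)) (CF.StT ⟨n, y⟩)
      = CF.StT (F.sSetT (Finset.range (m+n+1) \ ν) (CF.StT ⟨n, y⟩))
    rw [F.sSetT_insert_max hlt hnm]
    set μ' := Finset.range (m+n+1) \ ν with hμ'
    have hcond : ∀ a ∈ μ', ((Finset.range (a+1)) \ μ').card ≤ (⟨n, y⟩ : F.Tot).1 + 1 := by
      intro a ha
      have haR : a < m+n+1 := Finset.mem_range.mp (Finset.mem_sdiff.mp ha).1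
      have hsub : Finset.range (a+1) \ μ' ⊆ Finset.range (m+n+1) \ μ' := by
        refine Finset.sdiff_subset_sdiff ?_ le_rfl
        intro b hb
        have := Finset.mem_range.mp hb
        exact Finset.mem_range.mpr (by omega)
      have hμc : (Finset.range (m+n+1) \ μ').card = n + 1 := by
        rw [hμ', Finset.sdiff_sdiff_self_left, Finset.inter_eq_right.mpr hν, hc]
      calc (Finset.range (a+1) \ μ').card ≤ (Finset.range (m+n+1) \ μ').card :=
            Finset.card_le_card hsub
        _ = n + 1 := hμc
    obtain ⟨w, hw⟩ := CF.sSetT_StT_ex μ' ⟨n, y⟩ hcond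
    have hN : (F.sSetT μ' (CF.StT ⟨n, y⟩)).1 = m+n+1 := by
      show n + 1 + μ'.card = m+n+1
      rw [hcard]; omega
    have h5 : F.sT (m+n+1) (F.sSetT μ' (CF.StT ⟨n, y⟩))
        = F.sT (F.sSetT μ' (CF.StT ⟨n, y⟩)).1 (F.sSetT μ' (CF.StT ⟨n, y⟩)) := by
      rw [hN]
    rw [h5, CF.sT_top_of_StT hw]

/-- Case `m+n+1 ∈ ν`: the `A`-simplex equals the `S`-image of the `C`-simplex. -/
lemma simplex_eq2 {m n : ℕ} (x : E.X m) (y : F.X n) (ν : Finset ℕ)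
    (hν : ν ⊆ Finset.range (m+n+1)) (hc : ν.card = n)
    {h1 : m + 1 + (insert (m+n+1) ν).card = m+1+(n+1)}
    {h2 : n + 1 + (Finset.range (m+1+(n+1)) \ insert (m+n+1) ν).card = m+1+(n+1)}
    {h1' : m + 1 + ν.card = m+1+n}
    {h2' : n + (Finset.range (m+1+n) \ ν).card = m+1+n} :
    (⟨m+1+(n+1), (E.castX h1 (E.sSet (insert (m+n+1) ν) (CE.St x)),
        F.castX h2 (F.sSet (Finset.range (m+1+(n+1)) \ insert (m+n+1) ν) (CF.St y)))⟩
        : (E.prod F).Tot)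
    = ⟨m+1+n+1, (CE.St (E.castX h1' (E.sSet ν (CE.St x))),
        CF.St (F.castX h2' (F.sSet (Finset.range (m+1+n) \ ν) y)))⟩ := by
  have hr1 : Finset.range (m+1+(n+1)) = Finset.range (m+n+2) := by
    rw [show m+1+(n+1) = m+n+2 from by omega]
  have hr2 : Finset.range (m+1+n) = Finset.range (m+n+1) := by
    rw [show m+1+n = m+n+1 from by omega]
  have hN : m+n+1 ∉ ν := fun hb => by have := Finset.mem_range.mp (hν hb); omega
  have hlt : ∀ b ∈ ν, b < m+n+1 := fun b hb => Finset.mem_range.mp (hν hb)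
  apply tot_pair_eq
  · rw [E.tot_cast h1, CE.St_cast h1']
    show E.sSetT (insert (m+n+1) ν) (CE.StT ⟨m, x⟩)
      = CE.StT (E.sSetT ν (CE.StT ⟨m, x⟩))
    rw [E.sSetT_insert_max hlt hN]
    have hcond : ∀ a ∈ ν, ((Finset.range (a+1)) \ ν).card ≤ (⟨m, x⟩ : E.Tot).1 + 1 := by
      intro a ha
      have haR : a < m+n+1 := Finset.mem_range.mp (hν ha)
      have hsub : Finset.range (a+1) \ ν ⊆ Finset.range (m+n+1) \ ν := by
        refine Finset.sdiff_subset_sdiff ?_ le_rfl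
        intro b hb
        have := Finset.mem_range.mp hb
        exact Finset.mem_range.mpr (by omega)
      calc (Finset.range (a+1) \ ν).card ≤ (Finset.range (m+n+1) \ ν).card :=
            Finset.card_le_card hsub
        _ = m + 1 := by rw [Finset.card_sdiff_of_subset hν, Finset.card_range, hc]; omega
    obtain ⟨w, hw⟩ := CE.sSetT_StT_ex ν ⟨m, x⟩ hcond
    have hdeg : (E.sSetT ν (CE.StT ⟨m, x⟩)).1 = m+n+1 := by
      show m + 1 + ν.card = m+n+1
      rw [hc]; omega
    have h5 : E.sT (m+n+1) (E.sSetT ν (CE.StT ⟨m, x⟩))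
        = E.sT (E.sSetT ν (CE.StT ⟨m, x⟩)).1 (E.sSetT ν (CE.StT ⟨m, x⟩)) := by
      rw [hdeg]
    rw [h5, CE.sT_top_of_StT hw]
  · rw [F.tot_cast h2, CF.St_cast h2']
    rw [hr1, hr2]
    rw [aux_sdiff_insert_top hν]
    refine CF.sSetT_StT_comm (Finset.range (m+n+1) \ ν) ⟨n, y⟩ ?_
    intro a ha
    have haR : a < m+n+1 := Finset.mem_range.mp (Finset.mem_sdiff.mp ha).1
    set μ := Finset.range (m+n+1) \ ν with hμ
    have hsub : Finset.range (a+1) \ μ ⊆ Finset.range (m+n+1) \ μ := by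
      refine Finset.sdiff_subset_sdiff ?_ le_rfl
      intro b hb
      have := Finset.mem_range.mp hb
      exact Finset.mem_range.mpr (by omega)
    have hμc : (Finset.range (m+n+1) \ μ).card = n := by
      rw [hμ, Finset.sdiff_sdiff_self_left, Finset.inter_eq_right.mpr hν, hc]
    calc (Finset.range (a+1) \ μ).card ≤ (Finset.range (m+n+1) \ μ).card :=
          Finset.card_le_card hsub
      _ = n := hμc

end Simplex


section Key

lemma aux_neg_one_sq_pow (k : ℕ) : ((-1:R)^k) * ((-1:R)^k) = 1 := by
  rw [← mul_pow]; norm_num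

/-- The heart of Statement 16, on a pair of generators. -/
lemma key_identity (E F : SST) (CE : ConeData E) (CF : ConeData F) (m n : ℕ)
    (x : E.X m) (y : F.X n) :
    ((-1:R)^n) • shufAux R E F ⟨m+1, CE.St x⟩ ⟨n+1, CF.St y⟩
      - ((-1:R)^(m+n+1)) • (ConeData.prod R CE CF (shufAux R E F ⟨m, x⟩ ⟨n+1, CF.St y⟩))
      + ((-1:R)^(m+1)) • (ConeData.prod R CE CF (shufAux R E F ⟨m+1, CE.St x⟩ ⟨n, y⟩)) = 0 := by
  simp only [shufAux]
  rw [show (Finset.range (m+1+(n+1))).powerset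
      = (insert (m+n+1) (Finset.range (m+n+1))).powerset from by
        rw [show m+1+(n+1) = (m+n+1)+1 from by omega, Finset.range_add_one]]
  rw [Finset.sum_powerset_insert (by simp)]
  rw [show (Finset.range (m+(n+1))).powerset = (Finset.range (m+n+1)).powerset from by
        rw [show m+(n+1) = m+n+1 from by omega]]
  rw [show (Finset.range (m+1+n)).powerset = (Finset.range (m+n+1)).powerset from by
        rw [show m+1+n = m+n+1 from by omega]]
  rw [map_sum, map_sum, smul_add, Finset.smul_sum, Finset.smul_sum, Finset.smul_sum,
    Finset.smul_sum]
  rw [show ∀ (A B C D : Ch R (E.prod F)), A + B - C + D = (A - C) + (B + D) from by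
    intros; abel]
  rw [← Finset.sum_sub_distrib, ← Finset.sum_add_distrib, ← Finset.sum_add_distrib]
  apply Finset.sum_eq_zero
  intro ν hν
  have hsub : ν ⊆ Finset.range (m+n+1) := Finset.mem_powerset.mp hν
  have hNν : (m+n+1) ∉ ν := fun h => absurd (Finset.mem_range.mp (hsub h)) (by omega)
  have claim1 : (-1:R)^n •
      (if h : ν ⊆ Finset.range (m+1+(n+1)) ∧ ν.card = n+1 then
        ((shSign (Finset.range (m+1+(n+1)) \ ν) ν : ℤ) : R) •
          Finsupp.single
            (⟨m+1+(n+1),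
              (E.castX (by rw [h.2]) (E.sSet ν (CE.St x)),
               F.castX (by rw [Finset.card_sdiff_of_subset h.1, Finset.card_range, h.2]; omega)
                 (F.sSet ((Finset.range (m+1+(n+1))) \ ν) (CF.St y)))⟩ : (E.prod F).Tot) 1
      else 0)
      - (-1:R)^(m+n+1) • (ConeData.prod R CE CF
        (if h : ν ⊆ Finset.range (m+(n+1)) ∧ ν.card = n+1 then
          ((shSign (Finset.range (m+(n+1)) \ ν) ν : ℤ) : R) •
            Finsupp.single
              (⟨m+(n+1),
                (E.castX (by rw [h.2]) (E.sSet ν x),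
                 F.castX (by rw [Finset.card_sdiff_of_subset h.1, Finset.card_range, h.2]; omega)
                   (F.sSet ((Finset.range (m+(n+1))) \ ν) (CF.St y)))⟩ : (E.prod F).Tot) 1
        else 0)) = 0 := by
    by_cases hcard : ν.card = n+1
    · have hc1 : ν ⊆ Finset.range (m+1+(n+1)) ∧ ν.card = n+1 :=
        ⟨hsub.trans (Finset.range_subset_range.mpr (by omega)), hcard⟩
      have hc2 : ν ⊆ Finset.range (m+(n+1)) ∧ ν.card = n+1 :=
        ⟨hsub.trans (Finset.range_subset_range.mpr (by omega)), hcard⟩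
      rw [dif_pos hc1, dif_pos hc2, LinearMap.map_smul, Sprod_single]
      rw [smul_smul, smul_smul, smul_smul, sub_eq_zero]
      refine congr_arg₂ (· • ·) ?_
        (congrArg (fun t => Finsupp.single t (1:R)) ?_)
      · have hs1 : shSign (Finset.range (m+1+(n+1)) \ ν) ν
            = (-1)^(n+1) * shSign (Finset.range (m+(n+1)) \ ν) ν := by
          rw [show m+1+(n+1) = (m+n+1)+1 from by omega, show m+(n+1) = m+n+1 from by omega]
          exact aux_shSign_case1 hsub hcard
        rw [hs1]
        push_cast
        set s : R := ((shSign (Finset.range (m+(n+1)) \ ν) ν : ℤ) : R) with hsdef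
        rw [show m+(n+1) = m+n+1 from by omega, pow_succ]
        have hk := aux_neg_one_sq_pow R (m+n+1)
        have hn := aux_neg_one_sq_pow R n
        linear_combination (-s) * hn + s * hk
      · exact simplex_eq1 CE CF x y ν hsub hcard
    · rw [dif_neg (fun hc => hcard hc.2), dif_neg (fun hc => hcard hc.2)]
      simp
  have claim2 : (-1:R)^n •
      (if h : insert (m+n+1) ν ⊆ Finset.range (m+1+(n+1)) ∧ (insert (m+n+1) ν).card = n+1 then
        ((shSign (Finset.range (m+1+(n+1)) \ insert (m+n+1) ν) (insert (m+n+1) ν) : ℤ) : R) •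
          Finsupp.single
            (⟨m+1+(n+1),
              (E.castX (by rw [h.2]) (E.sSet (insert (m+n+1) ν) (CE.St x)),
               F.castX (by rw [Finset.card_sdiff_of_subset h.1, Finset.card_range, h.2]; omega)
                 (F.sSet ((Finset.range (m+1+(n+1))) \ insert (m+n+1) ν) (CF.St y)))⟩
               : (E.prod F).Tot) 1
      else 0)
      + (-1:R)^(m+1) • (ConeData.prod R CE CF
        (if h : ν ⊆ Finset.range (m+1+n) ∧ ν.card = n then
          ((shSign (Finset.range (m+1+n) \ ν) ν : ℤ) : R) •
            Finsupp.single
              (⟨m+1+n,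
                (E.castX (by rw [h.2]) (E.sSet ν (CE.St x)),
                 F.castX (by rw [Finset.card_sdiff_of_subset h.1, Finset.card_range, h.2]; omega)
                   (F.sSet ((Finset.range (m+1+n)) \ ν) y))⟩ : (E.prod F).Tot) 1
        else 0)) = 0 := by
    by_cases hcard : ν.card = n
    · have hc1 : insert (m+n+1) ν ⊆ Finset.range (m+1+(n+1))
          ∧ (insert (m+n+1) ν).card = n+1 := by
        constructor
        · rw [Finset.insert_subset_iff]
          exact ⟨Finset.mem_range.mpr (by omega),
            hsub.trans (Finset.range_subset_range.mpr (by omega))⟩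
        · rw [Finset.card_insert_of_notMem hNν, hcard]
      have hc2 : ν ⊆ Finset.range (m+1+n) ∧ ν.card = n :=
        ⟨hsub.trans (Finset.range_subset_range.mpr (by omega)), hcard⟩
      rw [dif_pos hc1, dif_pos hc2, LinearMap.map_smul, Sprod_single]
      rw [smul_smul, smul_smul, smul_smul, add_eq_zero_iff_eq_neg, ← neg_smul]
      refine congr_arg₂ (· • ·) ?_
        (congrArg (fun t => Finsupp.single t (1:R)) ?_)
      · have hs2 : shSign (Finset.range (m+1+(n+1)) \ insert (m+n+1) ν) (insert (m+n+1) ν)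
            = shSign (Finset.range (m+1+n) \ ν) ν := by
          rw [show m+1+(n+1) = (m+n+1)+1 from by omega, show m+1+n = m+n+1 from by omega,
            aux_sdiff_insert_top hsub]
          exact aux_shSign_case2 hsub
        rw [hs2]
        push_cast
        set s : R := ((shSign (Finset.range (m+1+n) \ ν) ν : ℤ) : R) with hsdef
        rw [show m+1+n = (m+1)+n from rfl, pow_add]
        have hk := aux_neg_one_sq_pow R (m+1)
        linear_combination (-(((-1:R)^n) * s)) * hk
      · exact simplex_eq2 CE CF x y ν hsub hcard
    · have hd1 : ¬(insert (m+n+1) ν ⊆ Finset.range (m+1+(n+1))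
          ∧ (insert (m+n+1) ν).card = n+1) := by
        rintro ⟨-, hc⟩
        rw [Finset.card_insert_of_notMem hNν] at hc
        omega
      rw [dif_neg hd1, dif_neg (fun hc => hcard hc.2)]
      simp
  rw [claim1, claim2, add_zero]

end Key

end Aux

/-- `∇ (S_G ⊗ S_H) = S_{G×H} ∇ (1 ⊗ S_H - S_G ⊗ 1)` on normalised chains. -/
theorem shuffle_cone_operator_identity (E F : SST)
    (CE : ConeData E) (CF : ConeData F) :
    ∀ z : Ch R E ⊗[R] Ch R F,
      shufT R E F (map (Sop R E CE) (Sop R F CF)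
          (map (parOp R E) (LinearMap.id (M := Ch R F)) z))
        - ConeData.prod R CE CF (shufT R E F
            (map (LinearMap.id (M := Ch R E)) (Sop R F CF)
              (map (parOp R E) (LinearMap.id (M := Ch R F)) z)))
        + ConeData.prod R CE CF (shufT R E F
            (map (Sop R E CE) (LinearMap.id (M := Ch R F)) z))
        ∈ DegSub R (E.prod F) := by
  have hmap : ∀ z : Ch R E ⊗[R] Ch R F,
      shufT R E F (map (Sop R E CE) (Sop R F CF)
          (map (parOp R E) (LinearMap.id (M := Ch R F)) z))
        - ConeData.prod R CE CF (shufT R E F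
            (map (LinearMap.id (M := Ch R E)) (Sop R F CF)
              (map (parOp R E) (LinearMap.id (M := Ch R F)) z)))
        + ConeData.prod R CE CF (shufT R E F
            (map (Sop R E CE) (LinearMap.id (M := Ch R F)) z)) = 0 := by
    suffices hL :
        ((shufT R E F ∘ₗ map (Sop R E CE) (Sop R F CF)
            ∘ₗ map (parOp R E) (LinearMap.id (M := Ch R F)))
        - (ConeData.prod R CE CF ∘ₗ shufT R E F
            ∘ₗ map (LinearMap.id (M := Ch R E)) (Sop R F CF)
            ∘ₗ map (parOp R E) (LinearMap.id (M := Ch R F)))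
        + (ConeData.prod R CE CF ∘ₗ shufT R E F
            ∘ₗ map (Sop R E CE) (LinearMap.id (M := Ch R F)))) = 0 by
      intro z
      have := LinearMap.congr_fun hL z
      simpa using this
    apply TensorProduct.ext
    refine Finsupp.lhom_ext fun p b => ?_
    refine Finsupp.lhom_ext fun q c => ?_
    obtain ⟨m, x⟩ := p
    obtain ⟨n, y⟩ := q
    simp only [LinearMap.compr₂_apply, LinearMap.compr₂ₛₗ_apply, TensorProduct.mk_apply, LinearMap.add_apply,
      LinearMap.sub_apply, LinearMap.comp_apply, LinearMap.zero_apply, map_tmul,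
      LinearMap.id_apply, parOp_single, Sop_single]
    simp only [LinearMap.map_smul, ← TensorProduct.smul_tmul', tmul_smul, Sop_single,
      shufT_single, ConeData.StT, smul_smul, one_mul, mul_one]
    have e1 : c * -(-1:R)^n * (b * (-1)^m * -(-1)^m) = (b*c) * (-1)^n := by
      have hk := aux_neg_one_sq_pow R m
      linear_combination (b * c * (-1:R)^n) * hk
    have e2 : c * -(-1:R)^n * (b * (-1)^m) = (b*c) * (-1)^(m+n+1) := by
      rw [pow_succ, pow_add]; ring
    have e3 : b * -(-1:R)^m * c = (b*c) * (-1)^(m+1) := by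
      rw [pow_succ]; ring
    rw [e1, e2, e3, mul_smul (b*c), mul_smul (b*c), mul_smul (b*c), ← smul_sub,
      ← smul_add, key_identity R E F CE CF m n x y, smul_zero]
  intro z
  rw [hmap z]
  exact Submodule.zero_mem _

end
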